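/- Let X and Y be real Hilbert spaces, A : X → Y a continuous linear map, b ∈ Y, S x = A x + b, u^δ ∈ Y and x* ∈ X. Let (α_n) be a sequence of positive reals with α_n → 0, and for each n let x_n be a minimizer of J_{α_n}(x) = ‖S x − u^δ‖² + α_n ‖x − x*‖² over X. Then for every x ∈ X, limsup_{n→∞} ‖S x_n − u^δ‖ ≤ ‖S x − u^δ‖; consequently ‖S x_n − u^δ‖ converges to inf_{x ∈ X} ‖S x − u^δ‖. -/
import Mathlib


open Filter

/-- If `α_n → 0` with `α_n > 0` and `x_n` minimizes the Tikhonov functional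
`J_{α_n}(x) = ‖A x + b − u^δ‖² + α_n‖x − x*‖²`, then for every `x ∈ X`
`limsup ‖A x_n + b − u^δ‖ ≤ ‖A x + b − u^δ‖`, and consequently `‖A x_n + b − u^δ‖`
converges to `inf_{x ∈ X} ‖A x + b − u^δ‖`. -/
theorem tikhonov_residual_tendsto_inf
    {X Y : Type*}
    [NormedAddCommGroup X] [InnerProductSpace ℝ X] [CompleteSpace X]
    [NormedAddCommGroup Y] [InnerProductSpace ℝ Y] [CompleteSpace Y]
    (A : X →L[ℝ] Y) (b uδ : Y) (xstar : X)
    (α : ℕ → ℝ) (hαpos : ∀ n, 0 < α n) (hα0 : Tendsto α atTop (nhds 0))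
    (xseq : ℕ → X)
    (hmin : ∀ n, ∀ x : X,
      ‖A (xseq n) + b - uδ‖ ^ 2 + α n * ‖xseq n - xstar‖ ^ 2
        ≤ ‖A x + b - uδ‖ ^ 2 + α n * ‖x - xstar‖ ^ 2) :
    (∀ x : X,
        limsup (fun n => ‖A (xseq n) + b - uδ‖) atTop ≤ ‖A x + b - uδ‖) ∧
    Tendsto (fun n => ‖A (xseq n) + b - uδ‖) atTop
      (nhds (⨅ x : X, ‖A x + b - uδ‖)) := by
  set f : ℕ → ℝ := fun n => ‖A (xseq n) + b - uδ‖ with hf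
  have hf0 : ∀ n, 0 ≤ f n := fun n => norm_nonneg _
  -- f n ≤ sqrt (c x ^ 2 + α n * ‖x - xstar‖ ^ 2)
  have key : ∀ (x : X) (n : ℕ),
      f n ≤ Real.sqrt (‖A x + b - uδ‖ ^ 2 + α n * ‖x - xstar‖ ^ 2) := by
    intro x n
    have h1 : f n ^ 2 ≤ ‖A x + b - uδ‖ ^ 2 + α n * ‖x - xstar‖ ^ 2 := by
      have := hmin n x
      nlinarith [sq_nonneg (‖xseq n - xstar‖), (hαpos n).le]
    calc f n = Real.sqrt (f n ^ 2) := by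
          rw [Real.sqrt_sq (hf0 n)]
      _ ≤ _ := Real.sqrt_le_sqrt h1
  have hbdd : ∀ x : X, IsBoundedUnder (· ≤ ·) atTop
      (fun n => Real.sqrt (‖A x + b - uδ‖ ^ 2 + α n * ‖x - xstar‖ ^ 2)) := by
    intro x
    have : Tendsto (fun n => Real.sqrt (‖A x + b - uδ‖ ^ 2 + α n * ‖x - xstar‖ ^ 2))
        atTop (nhds (Real.sqrt (‖A x + b - uδ‖ ^ 2 + 0 * ‖x - xstar‖ ^ 2))) := by
      exact (Real.continuous_sqrt.tendsto _).comp
        ((tendsto_const_nhds.add ((hα0.mul_const _))))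
    exact this.isBoundedUnder_le
  have hfbdd : IsBoundedUnder (· ≤ ·) atTop f :=
    (hbdd xstar).mono_le (Eventually.of_forall (key xstar))
  have hcobdd : IsCoboundedUnder (· ≥ ·) atTop f :=
    hfbdd.isCoboundedUnder_ge
  have hcobdd' : IsCoboundedUnder (· ≤ ·) atTop f :=
    isCoboundedUnder_le_of_eventually_le atTop (x := 0) (Eventually.of_forall hf0)
  have hbddge : IsBoundedUnder (· ≥ ·) atTop f :=
    isBoundedUnder_of ⟨0, fun n => (hf0 n)⟩
  have hlimsup : ∀ x : X, limsup f atTop ≤ ‖A x + b - uδ‖ := by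
    intro x
    have ht : Tendsto (fun n => Real.sqrt (‖A x + b - uδ‖ ^ 2 + α n * ‖x - xstar‖ ^ 2))
        atTop (nhds ‖A x + b - uδ‖) := by
      have : Tendsto (fun n => Real.sqrt (‖A x + b - uδ‖ ^ 2 + α n * ‖x - xstar‖ ^ 2))
          atTop (nhds (Real.sqrt (‖A x + b - uδ‖ ^ 2 + 0 * ‖x - xstar‖ ^ 2))) :=
        (Real.continuous_sqrt.tendsto _).comp
          ((tendsto_const_nhds.add ((hα0.mul_const _))))
      simpa [Real.sqrt_sq (norm_nonneg _)] using this
    calc limsup f atTop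
        ≤ limsup (fun n => Real.sqrt (‖A x + b - uδ‖ ^ 2 + α n * ‖x - xstar‖ ^ 2)) atTop :=
          limsup_le_limsup (Eventually.of_forall (key x)) hcobdd' (hbdd x)
      _ = ‖A x + b - uδ‖ := ht.limsup_eq
  refine ⟨hlimsup, ?_⟩
  have hrangebdd : BddBelow (Set.range fun x : X => ‖A x + b - uδ‖) :=
    ⟨0, by rintro _ ⟨x, rfl⟩; exact norm_nonneg _⟩
  have hsup : limsup f atTop ≤ ⨅ x : X, ‖A x + b - uδ‖ :=
    le_ciInf hlimsup
  have hinf : (⨅ x : X, ‖A x + b - uδ‖) ≤ liminf f atTop := by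
    apply le_liminf_of_le hcobdd
    exact Eventually.of_forall fun n => ciInf_le hrangebdd (xseq n)
  exact tendsto_of_le_liminf_of_limsup_le hinf hsup hfbdd hbddge
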